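/- The map $\theta: \mathbb{L} \to \mathbb{W}(\mathbb{L})$, $r \mapsto \theta(r)$ with $\theta(r)(m_{(n)}) = nr$ and $\theta(r)(m_\lambda) = \infty$ otherwise, is a monoidal functor of monoidal posets: it is monotone, $\theta(0) = \overline{0}$, and $\theta(r) \otimes_{\mathbb{W}(\mathbb{L})} \theta(r') = \theta(r + r')$ for all $r, r' \in [0,\infty]$. -/

import Mathlib

open scoped Classical ENNReal
open Tropical

noncomputable section

/-- The Lawvere quantale `𝕃 = [0,∞]` viewed as a rig: addition is `min`, multiplication is `+`. -/
abbrev Trop : Type := Tropical ℝ≥0∞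

/-- Coefficient of a formal power series in infinitely many variables. -/
def cf {σ : Type} (φ : MvPowerSeries σ ℕ) (d : σ →₀ ℕ) : ℕ := MvPowerSeries.coeff d φ

/-- The multiset of nonzero entries of an exponent vector. -/
def parts (d : ℕ →₀ ℕ) : Multiset ℕ := d.support.val.map d

lemma zero_not_mem_parts (d : ℕ →₀ ℕ) : (0 : ℕ) ∉ parts d := by
  intro h
  obtain ⟨a, ha, ha0⟩ := Multiset.mem_map.mp h
  exact Finsupp.mem_support_iff.mp (Finset.mem_val.mp ha) ha0

/-- Partitions: multisets of positive natural numbers. -/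
def Ptn : Type := {s : Multiset ℕ // (0 : ℕ) ∉ s}

/-- The monomial symmetric function `m_λ`, as a symmetric power series of bounded degree
in the variables `x_0, x_1, x_2, …`. -/
def mfun (l : Multiset ℕ) : MvPowerSeries ℕ ℕ := fun d => if parts d = l then 1 else 0

/-- `Λ`, the rig of symmetric functions with coefficients in `ℕ`: the subsemiring of
power series generated by the monomial symmetric functions. -/
def Lam : Subsemiring (MvPowerSeries ℕ ℕ) :=
  Subsemiring.closure (Set.range fun l : Ptn => mfun l.1)

/-- `m_λ` as an element of `Λ`. -/
def mP (l : Ptn) : Lam := ⟨mfun l.1, Subsemiring.subset_closure (Set.mem_range_self l)⟩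

/-- The one-part partition `(n)`. -/
def pnat (n : ℕ) (hn : 0 < n) : Ptn := ⟨{n}, fun h => hn.ne' (Multiset.mem_singleton.mp h).symm⟩

/-- The Witt vectors of the Lawvere quantale: rig homomorphisms `Λ → 𝕃`. -/
abbrev WL := Lam →+* Trop

/-- Row margin of an exponent vector on `ℕ × ℕ`. -/
def rowM (e : (ℕ × ℕ) →₀ ℕ) : ℕ →₀ ℕ := e.mapDomain Prod.fst
/-- Column margin of an exponent vector on `ℕ × ℕ`. -/
def colM (e : (ℕ × ℕ) →₀ ℕ) : ℕ →₀ ℕ := e.mapDomain Prod.snd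

/-- The elementary tensor `a ⊗ b` in `Λ ⊗ Λ`, realized as a power series on variables
`x_i ⊗ x_j` indexed by `ℕ × ℕ`. -/
def tens (a b : MvPowerSeries ℕ ℕ) : MvPowerSeries (ℕ × ℕ) ℕ :=
  fun e => cf a (rowM e) * cf b (colM e)

/-- Comultiplication `Δ^×`: substitute the family `x_i ⊗ x_j` for the variables,
along a bijection `ℕ ≃ ℕ × ℕ`. -/
def Dmul (eqt : ℕ ≃ ℕ × ℕ) (φ : MvPowerSeries ℕ ℕ) : MvPowerSeries (ℕ × ℕ) ℕ :=
  fun e => cf φ (Finsupp.equivMapDomain eqt.symm e)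

/-- Left margin of an exponent vector on `ℕ ⊕ ℕ`. -/
def lM (e : (ℕ ⊕ ℕ) →₀ ℕ) : ℕ →₀ ℕ := Finsupp.comapDomain Sum.inl e Sum.inl_injective.injOn
/-- Right margin of an exponent vector on `ℕ ⊕ ℕ`. -/
def rM (e : (ℕ ⊕ ℕ) →₀ ℕ) : ℕ →₀ ℕ := Finsupp.comapDomain Sum.inr e Sum.inr_injective.injOn

/-- The elementary tensor `a ⊗ b` realized as a power series on `ℕ ⊕ ℕ`. -/
def tensP (a b : MvPowerSeries ℕ ℕ) : MvPowerSeries (ℕ ⊕ ℕ) ℕ :=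
  fun e => cf a (lM e) * cf b (rM e)

/-- Coaddition `Δ^+`: substitute `x_i ⊗ 1` and `1 ⊗ x_i` for the variables,
along a bijection `ℕ ≃ ℕ ⊕ ℕ`. -/
def Dadd (eqp : ℕ ≃ ℕ ⊕ ℕ) (φ : MvPowerSeries ℕ ℕ) : MvPowerSeries (ℕ ⊕ ℕ) ℕ :=
  fun e => cf φ (Finsupp.equivMapDomain eqp.symm e)

/-- The order on `𝕎(𝕃)`: `f ≤ g` iff `g (m_λ) ≤ f (m_λ)` (usual order on `[0,∞]`)
for every partition `λ ∈ ℙ`. -/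
def leF (F G : Lam → Trop) : Prop :=
  ∀ l : Ptn, l.1 ≠ 0 → untrop (G (mP l)) ≤ untrop (F (mP l))

/-- Witt multiplication: `(f ⊗ g)(φ) = min` of `f(m_μ) + g(m_μ')` over the pairs `(μ, μ')`
occurring in `Δ^×(φ)`. -/
def wmulF (eqt : ℕ ≃ ℕ × ℕ) (F G : Lam → Trop) : Lam → Trop := fun φ =>
  trop (sInf {x : ℝ≥0∞ | ∃ e, cf (Dmul eqt (φ : MvPowerSeries ℕ ℕ)) e ≠ 0 ∧
    x = untrop (F (mP ⟨parts (rowM e), zero_not_mem_parts _⟩)) +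
        untrop (G (mP ⟨parts (colM e), zero_not_mem_parts _⟩))})

/-- Witt addition: `(f ⊕ g)(φ) = min` of `f(m_μ) + g(m_μ')` over the pairs `(μ, μ')`
occurring in `Δ^+(φ)`. -/
def waddF (eqp : ℕ ≃ ℕ ⊕ ℕ) (F G : Lam → Trop) : Lam → Trop := fun φ =>
  trop (sInf {x : ℝ≥0∞ | ∃ e, cf (Dadd eqp (φ : MvPowerSeries ℕ ℕ)) e ≠ 0 ∧
    x = untrop (F (mP ⟨parts (lM e), zero_not_mem_parts _⟩)) +
        untrop (G (mP ⟨parts (rM e), zero_not_mem_parts _⟩))})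

/-- Specification of the multiplicative unit `0̄` of `𝕎(𝕃)`:
`0̄(m_(n)) = 0` for one-part partitions and `0̄(m_λ) = ∞` otherwise. -/
def zbar (z : WL) : Prop :=
  ∀ l : Ptn, z (mP l) = if l.1.card ≤ 1 then trop (0 : ℝ≥0∞) else trop (⊤ : ℝ≥0∞)

/-- Specification of `θ(r) ∈ 𝕎(𝕃)`: `θ(r)(m_(n)) = n·r` for one-part partitions and
`θ(r)(m_λ) = ∞` for all other nonempty partitions. -/
def thetaSpec (r : ℝ≥0∞) (F : WL) : Prop :=
  ∀ l : Ptn, l.1 ≠ 0 →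
    F (mP l) = if l.1.card = 1 then trop ((l.1.sum : ℝ≥0∞) * r) else trop (⊤ : ℝ≥0∞)

-- ==================== auxiliary lemmas ====================

lemma cf_apply' {σ : Type} (φ : MvPowerSeries σ ℕ) (d : σ →₀ ℕ) : cf φ d = φ d := rfl

lemma cf_add (x y : MvPowerSeries ℕ ℕ) (d : ℕ →₀ ℕ) : cf (x + y) d = cf x d + cf y d := by
  simp [cf, map_add]

lemma cf_Dmul (eqt : ℕ ≃ ℕ × ℕ) (ψ : MvPowerSeries ℕ ℕ) (e : (ℕ × ℕ) →₀ ℕ) :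
    cf (Dmul eqt ψ) e = cf ψ (Finsupp.equivMapDomain eqt.symm e) := rfl

lemma parts_zero : parts 0 = 0 := by simp [parts]

lemma parts_eq_zero_iff {d : ℕ →₀ ℕ} : parts d = 0 ↔ d = 0 := by
  rw [parts, Multiset.map_eq_zero, Finset.val_eq_zero, Finsupp.support_eq_empty]

lemma parts_single {i k : ℕ} (hk : k ≠ 0) : parts (Finsupp.single i k) = {k} := by
  rw [parts, Finsupp.support_single_ne_zero _ hk]
  simp

lemma parts_card (d : ℕ →₀ ℕ) : Multiset.card (parts d) = d.support.card := by
  rw [parts, Multiset.card_map]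
  rfl

open scoped Pointwise

lemma cf_one (d : ℕ →₀ ℕ) : cf (1 : MvPowerSeries ℕ ℕ) d = if d = 0 then 1 else 0 := by
  rw [cf, MvPowerSeries.coeff_one]

lemma cf_mfun (l : Multiset ℕ) (d : ℕ →₀ ℕ) :
    cf (mfun l) d = if parts d = l then 1 else 0 := rfl

lemma cf_mul_single (x y : MvPowerSeries ℕ ℕ) (i k : ℕ) :
    cf (x * y) (Finsupp.single i k) =
      ∑ p ∈ Finset.HasAntidiagonal.antidiagonal k, cf x (Finsupp.single i p.1) * cf y (Finsupp.single i p.2) := by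
  rw [cf, MvPowerSeries.coeff_mul, Finsupp.antidiagonal_single, Finset.sum_map]
  rfl

lemma mfun_zero : mfun 0 = (1 : MvPowerSeries ℕ ℕ) := by
  apply MvPowerSeries.ext
  intro d
  rw [show MvPowerSeries.coeff d (mfun 0) = cf (mfun 0) d from rfl, cf_mfun,
    show MvPowerSeries.coeff d 1 = cf 1 d from rfl, cf_one]
  simp [parts_eq_zero_iff]

lemma mP_eq_one {l : Ptn} (h : l.1 = 0) : mP l = 1 := by
  apply Subtype.ext
  show mfun l.1 = 1
  rw [h, mfun_zero]

lemma le_mapDomain_apply {α β : Type} (f : α → β) (e : α →₀ ℕ) (p : α) :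
    e p ≤ Finsupp.mapDomain f e (f p) := by
  classical
  rw [Finsupp.mapDomain, Finsupp.sum_apply, Finsupp.sum]
  by_cases hp : p ∈ e.support
  · have := Finset.single_le_sum (f := fun a => (Finsupp.single (f a) (e a)) (f p))
      (fun i _ => Nat.zero_le _) hp
    simpa using this
  · simp [Finsupp.notMem_support_iff.mp hp]

/-- Symmetry of elements of `Λ` in single-variable monomials. -/
lemma cf_symm {φ : MvPowerSeries ℕ ℕ} (hφ : φ ∈ Lam) (i k : ℕ) :
    cf φ (Finsupp.single i k) = cf φ (Finsupp.single 0 k) := by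
  revert i k
  induction hφ using Subsemiring.closure_induction with
  | mem x hx =>
    obtain ⟨l, rfl⟩ := hx
    intro i k
    rcases eq_or_ne k 0 with rfl | hk
    · rw [Finsupp.single_zero, Finsupp.single_zero]
    · rw [cf_mfun, cf_mfun, parts_single hk, parts_single hk]
  | zero => intro i k; simp [cf]
  | one =>
    intro i k
    rcases eq_or_ne k 0 with rfl | hk
    · rw [Finsupp.single_zero, Finsupp.single_zero]
    · rw [cf_one, cf_one, if_neg (by simp [Finsupp.single_eq_zero, hk]),
        if_neg (by simp [Finsupp.single_eq_zero, hk])]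
  | add x y hx hy ihx ihy =>
    intro i k
    rw [cf_add, cf_add, ihx i k, ihy i k]
  | mul x y hx hy ihx ihy =>
    intro i k
    rw [cf_mul_single, cf_mul_single]
    exact Finset.sum_congr rfl fun p _ => by rw [ihx i p.1, ihy i p.2]

/-- The set of values `k·s` over monomials `x₀ᵏ` occurring in `φ`. -/
def Sv (s : ℝ≥0∞) (φ : MvPowerSeries ℕ ℕ) : Set ℝ≥0∞ :=
  {x | ∃ k : ℕ, cf φ (Finsupp.single 0 k) ≠ 0 ∧ x = (k : ℝ≥0∞) * s}

lemma Sv_zero (s : ℝ≥0∞) : Sv s 0 = ∅ := by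
  ext x; simp [Sv, cf]

lemma Sv_one (s : ℝ≥0∞) : Sv s 1 = {0} := by
  ext x
  simp only [Sv, Set.mem_setOf_eq, Set.mem_singleton_iff, cf_one, Finsupp.single_eq_zero]
  constructor
  · rintro ⟨k, hk, rfl⟩
    rcases eq_or_ne k 0 with rfl | hk0
    · simp
    · simp [hk0] at hk
  · rintro rfl
    exact ⟨0, by simp, by simp⟩

lemma Sv_add (s : ℝ≥0∞) (x y : MvPowerSeries ℕ ℕ) : Sv s (x + y) = Sv s x ∪ Sv s y := by
  ext t
  simp only [Sv, Set.mem_setOf_eq, Set.mem_union, cf_add]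
  constructor
  · rintro ⟨k, hk, rfl⟩
    rcases Nat.eq_zero_or_pos (cf x (Finsupp.single 0 k)) with h0 | h0
    · exact Or.inr ⟨k, by omega, rfl⟩
    · exact Or.inl ⟨k, by omega, rfl⟩
  · rintro (⟨k, hk, rfl⟩ | ⟨k, hk, rfl⟩) <;> exact ⟨k, by omega, rfl⟩

lemma Sv_mul (s : ℝ≥0∞) (x y : MvPowerSeries ℕ ℕ) : Sv s (x * y) = Sv s x + Sv s y := by
  ext t
  simp only [Sv, Set.mem_setOf_eq, Set.mem_add]
  constructor
  · rintro ⟨k, hk, rfl⟩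
    rw [cf_mul_single] at hk
    obtain ⟨p, hp, hpne⟩ := Finset.exists_ne_zero_of_sum_ne_zero hk
    rw [Finset.HasAntidiagonal.mem_antidiagonal] at hp
    refine ⟨(p.1 : ℝ≥0∞) * s, ⟨p.1, fun h => hpne (by simp [h]), rfl⟩,
      (p.2 : ℝ≥0∞) * s, ⟨p.2, fun h => hpne (by simp [h]), rfl⟩, ?_⟩
    rw [← add_mul, ← Nat.cast_add, hp]
  · rintro ⟨a, ⟨k1, hk1, rfl⟩, b, ⟨k2, hk2, rfl⟩, rfl⟩
    refine ⟨k1 + k2, ?_, by rw [Nat.cast_add, add_mul]⟩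
    rw [cf_mul_single]
    intro hzero
    rw [Finset.sum_eq_zero_iff] at hzero
    have := hzero (k1, k2) (Finset.HasAntidiagonal.mem_antidiagonal.mpr rfl)
    simp only [Nat.mul_eq_zero] at this
    tauto

lemma sInf_add_set (A B : Set ℝ≥0∞) : sInf (A + B) = sInf A + sInf B := by
  apply le_antisymm
  · have h1 : sInf A + sInf B = ⨅ a ∈ A, ⨅ b ∈ B, a + b := by
      rw [ENNReal.sInf_add]
      refine iInf_congr fun a => iInf_congr fun _ => ?_
      rw [sInf_eq_iInf]
      simp only [ENNReal.add_iInf, add_comm]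
    rw [h1]
    exact le_iInf₂ fun a ha => le_iInf₂ fun b hb => sInf_le (Set.add_mem_add ha hb)
  · refine le_sInf fun t ht => ?_
    obtain ⟨a, ha, b, hb, rfl⟩ := Set.mem_add.mp ht
    exact add_le_add (sInf_le ha) (sInf_le hb)

/-- Evaluation of any rig homomorphism satisfying `thetaSpec s` on an arbitrary element of `Λ`. -/
lemma thetaEval (s : ℝ≥0∞) (F : WL) (hF : thetaSpec s F) {φ : MvPowerSeries ℕ ℕ}
    (hφ : φ ∈ Lam) : F ⟨φ, hφ⟩ = trop (sInf (Sv s φ)) := by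
  induction hφ using Subsemiring.closure_induction with
  | mem x hx =>
    obtain ⟨l, rfl⟩ := hx
    show F (mP l) = trop (sInf (Sv s (mfun l.1)))
    rcases eq_or_ne l.1 0 with h0 | h0
    · rw [mP_eq_one h0, map_one, h0, mfun_zero, Sv_one, csInf_singleton, trop_zero]
    · rw [hF l h0]
      by_cases hc : Multiset.card l.1 = 1
      · obtain ⟨k, hk⟩ := Multiset.card_eq_one.mp hc
        have hkne : k ≠ 0 := by
          intro h
          exact l.2 (by rw [hk, h]; exact Multiset.mem_singleton_self 0)
        have hS : Sv s (mfun l.1) = {(k : ℝ≥0∞) * s} := by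
          ext t
          simp only [Sv, Set.mem_setOf_eq, Set.mem_singleton_iff, cf_mfun, hk]
          constructor
          · rintro ⟨k', hk', rfl⟩
            rcases eq_or_ne k' 0 with rfl | hk'0
            · rw [Finsupp.single_zero, parts_eq_zero_iff.mpr rfl] at hk'
              simp only [ne_eq, ite_eq_right_iff, not_forall] at hk'
              exact absurd hk'.1.symm (Multiset.singleton_ne_zero k)
            · rw [parts_single hk'0] at hk'
              simp only [ne_eq, ite_eq_right_iff, not_forall] at hk'
              rw [Multiset.singleton_inj.mp hk'.1]
          · rintro rfl
            exact ⟨k, by rw [parts_single hkne]; simp, rfl⟩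
        rw [if_pos hc, hS, csInf_singleton, hk]
        simp
      · have hS : Sv s (mfun l.1) = ∅ := by
          ext t
          simp only [Sv, Set.mem_setOf_eq, Set.mem_empty_iff_false, iff_false, not_exists,
            not_and, cf_mfun]
          intro k hk
          rcases eq_or_ne k 0 with rfl | hk0
          · rw [Finsupp.single_zero, parts_eq_zero_iff.mpr rfl] at hk
            simp only [ne_eq, ite_eq_right_iff, not_forall] at hk
            exact absurd hk.1.symm h0
          · rw [parts_single hk0] at hk
            simp only [ne_eq, ite_eq_right_iff, not_forall] at hk
            exact absurd (by rw [← hk.1]; rfl) hc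
        rw [if_neg hc, hS, sInf_empty]
  | zero =>
    show F 0 = _
    rw [map_zero, Sv_zero, sInf_empty]
    exact trop_top.symm
  | one =>
    show F 1 = _
    rw [map_one, Sv_one, csInf_singleton, trop_zero]
  | add x y hx hy ihx ihy =>
    show F (⟨x, hx⟩ + ⟨y, hy⟩) = _
    rw [map_add, ihx, ihy, Sv_add, sInf_union, ← trop_min]
  | mul x y hx hy ihx ihy =>
    show F (⟨x, hx⟩ * ⟨y, hy⟩) = _
    rw [map_mul, ihx, ihy, Sv_mul, sInf_add_set, ← trop_add]
/-- The map `θ : 𝕃 → 𝕎(𝕃)` is a monoidal functor of monoidal posets: it is monotone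
(for the Lawvere orders), `θ(0) = 0̄`, and `θ(r) ⊗ θ(r') = θ(r + r')`. -/
theorem theta_monoidal (eqt : ℕ ≃ ℕ × ℕ) (Θ : ℝ≥0∞ → WL) (hΘ : ∀ r, thetaSpec r (Θ r)) :
    (∀ r r' : ℝ≥0∞, r' ≤ r → leF ⇑(Θ r) ⇑(Θ r')) ∧
    (∀ z : WL, zbar z → Θ 0 = z) ∧
    (∀ r r' : ℝ≥0∞, wmulF eqt ⇑(Θ r) ⇑(Θ r') = ⇑(Θ (r + r'))) := by
  have theta_untrop : ∀ (s : ℝ≥0∞) (l : Ptn),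
      untrop (Θ s (mP l)) = if Multiset.card l.1 ≤ 1 then (l.1.sum : ℝ≥0∞) * s else ⊤ := by
    intro s l
    rcases eq_or_ne l.1 0 with h0 | h0
    · rw [mP_eq_one h0, map_one, untrop_one, if_pos (by rw [h0]; simp), h0]
      simp
    · rw [hΘ s l h0]
      by_cases hc : Multiset.card l.1 = 1
      · rw [if_pos hc, if_pos hc.le, untrop_trop]
      · have hcc : ¬ Multiset.card l.1 ≤ 1 := by
          have : Multiset.card l.1 ≠ 0 := by simpa [Multiset.card_eq_zero] using h0
          omega
        rw [if_neg hc, if_neg hcc, untrop_trop]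
  have hval : ∀ (s : ℝ≥0∞) (d : ℕ →₀ ℕ) (i k : ℕ), d = Finsupp.single i k →
      untrop (Θ s (mP ⟨parts d, zero_not_mem_parts _⟩)) = (k : ℝ≥0∞) * s := by
    intro s d i k hd
    subst hd
    refine (theta_untrop s _).trans ?_
    rcases eq_or_ne k 0 with rfl | hk
    · have hp : parts (Finsupp.single i 0) = 0 := parts_eq_zero_iff.mpr (Finsupp.single_zero i)
      show (if Multiset.card (parts (Finsupp.single i 0)) ≤ 1 then _ else _) = _
      simp [hp, parts_zero]
    · show (if Multiset.card (parts (Finsupp.single i k)) ≤ 1 then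
        ((parts (Finsupp.single i k)).sum : ℝ≥0∞) * s else ⊤) = _
      rw [parts_single hk]
      simp
  refine ⟨?_, ?_, ?_⟩
  · -- monotonicity
    intro r r' hrr l hl
    rw [theta_untrop r l, theta_untrop r' l]
    split
    · exact mul_le_mul_right hrr _
    · exact le_rfl
  · -- unit
    intro z hz
    have hz' : thetaSpec 0 z := by
      intro l hl
      rw [hz l]
      by_cases hc : Multiset.card l.1 = 1
      · rw [if_pos hc, if_pos hc.le, mul_zero]
      · have hcc : ¬ Multiset.card l.1 ≤ 1 := by
          have : Multiset.card l.1 ≠ 0 := by simpa [Multiset.card_eq_zero] using hl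
          omega
        rw [if_neg hc, if_neg hcc]
    apply RingHom.ext
    intro x
    exact (thetaEval 0 (Θ 0) (hΘ 0) x.2).trans (thetaEval 0 z hz' x.2).symm
  · -- multiplicativity
    intro r r'
    funext φ
    rw [show Θ (r + r') φ = trop (sInf (Sv (r + r') φ.1)) from
      thetaEval (r + r') (Θ (r + r')) (hΘ (r + r')) φ.2]
    rw [wmulF]
    refine congrArg trop (le_antisymm ?_ ?_)
    · -- sInf W ≤ sInf Sv
      refine le_sInf fun x hx => ?_
      obtain ⟨k, hk, rfl⟩ := hx
      refine sInf_le ⟨Finsupp.single (eqt 0) k, ?_, ?_⟩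
      · rw [cf_Dmul, Finsupp.equivMapDomain_single, Equiv.symm_apply_apply]
        exact hk
      · rw [hval r (rowM (Finsupp.single (eqt 0) k)) (eqt 0).1 k Finsupp.mapDomain_single,
          hval r' (colM (Finsupp.single (eqt 0) k)) (eqt 0).2 k Finsupp.mapDomain_single,
          mul_add]
    · -- sInf Sv ≤ sInf W
      refine le_sInf fun w hw => ?_
      obtain ⟨e, hcf, rfl⟩ := hw
      by_cases h1 : Multiset.card (parts (rowM e)) ≤ 1
      · by_cases h2 : Multiset.card (parts (colM e)) ≤ 1
        · -- the support of e has at most one element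
          have hsupp : e.support.card ≤ 1 := by
            rw [parts_card] at h1 h2
            by_contra h
            obtain ⟨p, hp, q, hq, hpq⟩ := Finset.one_lt_card.mp (lt_of_not_ge h)
            have hmem : ∀ u : ℕ × ℕ, u ∈ e.support → u.1 ∈ (rowM e).support ∧
                u.2 ∈ (colM e).support := by
              intro u hu
              have hu' := Finsupp.mem_support_iff.mp hu
              constructor
              · exact Finsupp.mem_support_iff.mpr fun hz => hu'
                  (Nat.le_zero.mp (hz ▸ le_mapDomain_apply Prod.fst e u))
              · exact Finsupp.mem_support_iff.mpr fun hz => hu'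
                  (Nat.le_zero.mp (hz ▸ le_mapDomain_apply Prod.snd e u))
            have hne : p.1 ≠ q.1 ∨ p.2 ≠ q.2 := by
              by_contra hc
              push_neg at hc
              exact hpq (Prod.ext hc.1 hc.2)
            rcases hne with hne | hne
            · have : 1 < (rowM e).support.card :=
                Finset.one_lt_card.mpr ⟨p.1, (hmem p hp).1, q.1, (hmem q hq).1, hne⟩
              omega
            · have : 1 < (colM e).support.card :=
                Finset.one_lt_card.mpr ⟨p.2, (hmem p hp).2, q.2, (hmem q hq).2, hne⟩
              omega
          obtain ⟨p, k, rfl⟩ : ∃ p k, e = Finsupp.single p k := by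
            rcases Nat.le_one_iff_eq_zero_or_eq_one.mp hsupp with h | h
            · exact ⟨(0, 0), 0, by
                rw [Finsupp.single_zero]
                exact Finsupp.support_eq_empty.mp (Finset.card_eq_zero.mp h)⟩
            · obtain ⟨q, hq⟩ := Finset.card_eq_one.mp h
              exact ⟨q, e q, ((Finsupp.support_eq_singleton.mp hq).2)⟩
          have hcf' : cf (φ : MvPowerSeries ℕ ℕ) (Finsupp.single 0 k) ≠ 0 := by
            have h3 : cf (φ : MvPowerSeries ℕ ℕ) (Finsupp.single (eqt.symm p) k) ≠ 0 := by
              rw [← Finsupp.equivMapDomain_single eqt.symm p k, ← cf_Dmul]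
              exact hcf
            rwa [cf_symm φ.2] at h3
          refine le_trans (sInf_le ⟨k, hcf', rfl⟩) ?_
          rw [hval r (rowM (Finsupp.single p k)) p.1 k Finsupp.mapDomain_single,
            hval r' (colM (Finsupp.single p k)) p.2 k Finsupp.mapDomain_single, mul_add]
        · rw [show untrop (Θ r' (mP ⟨parts (colM e), zero_not_mem_parts _⟩)) = _ from theta_untrop r' _,
              if_neg h2, add_top]
          exact le_top
      · rw [show untrop (Θ r (mP ⟨parts (rowM e), zero_not_mem_parts _⟩)) = _ from theta_untrop r _,
            if_neg h1, top_add]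
        exact le_top

end
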